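/- Smoothed alternating-series approximation to the exponential: For every y > 0 and every r > 0, if L ~ Poisson(r), then |−∑_{i=0}^∞ (P(L ≥ i)/i!)(−y)^i + e^{−y}| ≤ e^{−r} (1 − e^{−y}). -/

import Mathlib

open MeasureTheory ProbabilityTheory Real
open scoped NNReal

lemma hasSum_exp_real (x : ℝ) : HasSum (fun n : ℕ => x ^ n / n.factorial) (Real.exp x) := by
  rw [Real.exp_eq_exp_ℝ]; exact NormedSpace.expSeries_div_hasSum_exp x

lemma summable_g (x : ℝ) : Summable (fun k : ℕ => (-x) ^ k / ((k.factorial : ℝ))^2) := by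
  apply Summable.of_norm
  apply Summable.of_nonneg_of_le (fun k => norm_nonneg _)
    (fun k => ?_) (Real.summable_pow_div_factorial |x|)
  have h1 : (1:ℝ) ≤ (k.factorial : ℝ) := by exact_mod_cast k.factorial_pos
  rw [norm_div, norm_pow, norm_neg, norm_pow]
  simp only [Real.norm_eq_abs, abs_abs, Nat.abs_cast]
  rw [sq]
  rw [div_le_div_iff₀ (by positivity) (by positivity)]
  nlinarith [pow_nonneg (abs_nonneg x) k, h1, mul_nonneg (pow_nonneg (abs_nonneg x) k) (le_trans zero_le_one h1)]

lemma wallis_prod (m : ℕ) :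
    ∏ i ∈ Finset.range m, (2*(i:ℝ)+1)/(2*i+2)
      = ((2*m).factorial : ℝ) / (4^m * ((m.factorial:ℝ))^2) := by
  induction m with
  | zero => simp
  | succ k ih =>
    rw [Finset.prod_range_succ, ih]
    have h1 : (2*(k+1)) = (2*k+1) + 1 := by ring
    rw [h1, Nat.factorial_succ, Nat.factorial_succ, Nat.factorial_succ]
    have h2 : ((k.factorial:ℝ)) ≠ 0 := by exact_mod_cast k.factorial_ne_zero
    have h3 : ((2*k).factorial:ℝ) ≠ 0 := by exact_mod_cast (2*k).factorial_ne_zero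
    push_cast
    field_simp
    ring

lemma abs_g_le_one {x : ℝ} (hx : 0 ≤ x) :
    |∑' k : ℕ, (-x) ^ k / ((k.factorial : ℝ))^2| ≤ 1 := by
  set z : ℝ := 2 * Real.sqrt x with hz
  have hz2 : z ^ 2 = 4 * x := by
    rw [hz, mul_pow, Real.sq_sqrt hx]; ring
  set F : ℕ → ℝ → ℝ := fun m θ => (-1)^m * (z * Real.sin θ)^(2*m) / ((2*m).factorial : ℝ)
    with hF
  have hcont : ∀ m, Continuous (F m) := by intro m; fun_prop
  have hF_int : ∀ m, Integrable (F m) (volume.restrict (Set.Ioc 0 π)) :=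
    fun m => (hcont m).integrableOn_Ioc
  -- value of each integral
  have hsin_int : ∀ m : ℕ, ∫ θ in Set.Ioc 0 π, (Real.sin θ)^(2*m)
      = π * (((2*m).factorial : ℝ) / (4^m * ((m.factorial:ℝ))^2)) := by
    intro m
    rw [← intervalIntegral.integral_of_le Real.pi_pos.le, integral_sin_pow_even, wallis_prod m]
  have hval : ∀ m : ℕ, ∫ θ in Set.Ioc 0 π, F m θ = π * ((-x)^m / ((m.factorial:ℝ))^2) := by
    intro m
    have : ∀ θ : ℝ, F m θ = ((-1)^m * z^(2*m) / ((2*m).factorial : ℝ)) * (Real.sin θ)^(2*m) := by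
      intro θ; rw [hF]; simp only [mul_pow]; ring
    simp_rw [this]
    rw [integral_const_mul, hsin_int m]
    have hfac : (((2*m).factorial : ℝ)) ≠ 0 := by exact_mod_cast (2*m).factorial_ne_zero
    have hmf : ((m.factorial:ℝ)) ≠ 0 := by exact_mod_cast m.factorial_ne_zero
    have hzpow : z^(2*m) = (4*x)^m := by rw [pow_mul, hz2]
    rw [hzpow]
    have h4 : ((-1:ℝ))^m * (4*x)^m = 4^m * (-x)^m := by
      rw [← mul_pow, ← mul_pow]; ring_nf
    rw [h4]
    have h40 : ((4:ℝ))^m ≠ 0 := by positivity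
    field_simp
  -- norm integrals summable
  have hnorm : ∀ m : ℕ, ∫ θ in Set.Ioc 0 π, ‖F m θ‖ ≤ π * (z^(2*m) / ((2*m).factorial : ℝ)) := by
    intro m
    have hb : ∀ θ : ℝ, ‖F m θ‖ ≤ z^(2*m) / ((2*m).factorial : ℝ) := by
      intro θ
      rw [hF]
      have h1 : |(-1:ℝ)^m * (z * Real.sin θ)^(2*m) / ((2*m).factorial : ℝ)|
          = (z * Real.sin θ)^(2*m) / ((2*m).factorial : ℝ) := by
        rw [abs_div, abs_mul, abs_pow, abs_pow, abs_neg, abs_one, one_pow, one_mul,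
          Nat.abs_cast, pow_mul, sq_abs, ← pow_mul]
      rw [Real.norm_eq_abs, h1]
      have hc : (0:ℝ) < ((2*m).factorial : ℝ) := by exact_mod_cast (2*m).factorial_pos
      have hnum : (z * Real.sin θ)^(2*m) ≤ z^(2*m) := by
        rw [mul_pow, pow_mul, pow_mul]
        have hs : (Real.sin θ)^2 ≤ 1 := by
          nlinarith [Real.neg_one_le_sin θ, Real.sin_le_one θ]
        calc (z^2)^m * ((Real.sin θ)^2)^m ≤ (z^2)^m * 1 := by
              have := pow_le_one₀ (n := m) (sq_nonneg (Real.sin θ)) hs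
              nlinarith [pow_nonneg (sq_nonneg z) m, pow_nonneg (sq_nonneg (Real.sin θ)) m]
          _ = (z^2)^m := by ring
      exact div_le_div_of_nonneg_right hnum hc.le
    calc ∫ θ in Set.Ioc 0 π, ‖F m θ‖
        ≤ ∫ θ in Set.Ioc 0 π, (z^(2*m) / ((2*m).factorial : ℝ)) := by
          apply integral_mono_of_nonneg
          · exact Filter.Eventually.of_forall fun θ => norm_nonneg _
          · exact integrable_const _
          · exact Filter.Eventually.of_forall hb
      _ = π * (z^(2*m) / ((2*m).factorial : ℝ)) := by
          rw [setIntegral_const]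
          simp [Real.volume_Ioc, ENNReal.toReal_ofReal Real.pi_pos.le, Real.pi_pos.le]
  have hF_sum : Summable (fun m : ℕ => ∫ θ in Set.Ioc 0 π, ‖F m θ‖) := by
    apply Summable.of_nonneg_of_le
      (fun m => integral_nonneg fun θ => norm_nonneg _) hnorm
    have h1 : Summable (fun m : ℕ => z^(2*m) / ((2*m).factorial : ℝ)) := by
      have hinj : Function.Injective (fun m : ℕ => 2*m) := by
        intro a b h
        dsimp at h
        omega
      exact (Real.summable_pow_div_factorial z).comp_injective hinj
    exact h1.mul_left π
  have hSum := MeasureTheory.hasSum_integral_of_summable_integral_norm hF_int hF_sum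
  have hpt : ∀ θ : ℝ, (∑' m, F m θ) = Real.cos (z * Real.sin θ) :=
    fun θ => (Real.hasSum_cos (z * Real.sin θ)).tsum_eq
  simp_rw [hval, hpt] at hSum
  have htsum : π * ∑' k : ℕ, (-x) ^ k / ((k.factorial : ℝ))^2
      = ∫ θ in Set.Ioc 0 π, Real.cos (z * Real.sin θ) := by
    rw [← hSum.tsum_eq, ← tsum_mul_left]
  have hbound : ‖∫ θ in Set.Ioc 0 π, Real.cos (z * Real.sin θ)‖
      ≤ 1 * (volume.restrict (Set.Ioc 0 π) Set.univ).toReal := by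
    apply norm_integral_le_of_norm_le_const
    exact Filter.Eventually.of_forall fun θ => by
      rw [Real.norm_eq_abs]; exact Real.abs_cos_le_one _
  rw [Measure.restrict_apply_univ, Real.volume_Ioc] at hbound
  have hπ : ((ENNReal.ofReal (π - 0)).toReal) = π := by
    simp [ENNReal.toReal_ofReal Real.pi_pos.le]
  rw [hπ, one_mul] at hbound
  have : |π * ∑' k : ℕ, (-x) ^ k / ((k.factorial : ℝ))^2| ≤ π := by
    rw [htsum]; exact hbound
  rw [abs_mul, abs_of_pos Real.pi_pos] at this
  calc |∑' k : ℕ, (-x) ^ k / ((k.factorial : ℝ))^2|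
      = π * |∑' k : ℕ, (-x) ^ k / ((k.factorial : ℝ))^2| / π := by
        field_simp
    _ ≤ π / π := by gcongr
    _ = 1 := by field_simp

lemma integral_exp_neg_interval (y : ℝ) :
    ∫ t in (0:ℝ)..y, Real.exp (-t) = 1 - Real.exp (-y) := by
  have : ∀ t ∈ Set.uIcc (0:ℝ) y, HasDerivAt (fun s => -Real.exp (-s)) (Real.exp (-t)) t := by
    intro t _
    have h1 : HasDerivAt (fun s : ℝ => -s) (-1) t := (hasDerivAt_id t).neg
    have h2 := (Real.hasDerivAt_exp (-t)).comp t h1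
    have h3 := h2.neg
    simpa [Function.comp_def, Pi.neg_def] using h3
  rw [intervalIntegral.integral_eq_sub_of_hasDerivAt this]
  · simp; ring
  · exact (Real.continuous_exp.comp continuous_neg).intervalIntegrable 0 y

lemma I_rec (y : ℝ) (k : ℕ) :
    ∫ t in (0:ℝ)..y, (y - t)^(k+1) * Real.exp (-t)
      = y^(k+1) - (k+1) * ∫ t in (0:ℝ)..y, (y - t)^k * Real.exp (-t) := by
  have hu : ∀ t ∈ Set.uIcc (0:ℝ) y,
      HasDerivAt (fun s => (y - s)^(k+1)) (-((k+1) * (y - t)^k)) t := by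
    intro t _
    have h1 : HasDerivAt (fun s : ℝ => y - s) (-1) t := by
      simpa [Pi.sub_def] using (hasDerivAt_const t y).sub (hasDerivAt_id' t)
    have h2 := h1.fun_pow (k+1)
    refine h2.congr_deriv ?_
    push_cast
    ring_nf
  have hv : ∀ t ∈ Set.uIcc (0:ℝ) y,
      HasDerivAt (fun s => -Real.exp (-s)) (Real.exp (-t)) t := by
    intro t _
    have h1 : HasDerivAt (fun s : ℝ => -s) (-1) t := (hasDerivAt_id t).neg
    simpa [Function.comp_def, Pi.neg_def] using ((Real.hasDerivAt_exp (-t)).comp t h1).neg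
  have hu' : IntervalIntegrable (fun t => -((k+1 : ℝ) * (y - t)^k)) volume 0 y := by
    apply Continuous.intervalIntegrable; fun_prop
  have hv' : IntervalIntegrable (fun t => Real.exp (-t)) volume 0 y := by
    apply Continuous.intervalIntegrable; fun_prop
  have h := intervalIntegral.integral_mul_deriv_eq_deriv_mul hu hv hu' hv'
  rw [h]
  have h2 : ∫ t in (0:ℝ)..y, -((k+1 : ℝ) * (y - t)^k) * -Real.exp (-t)
      = (k+1 : ℝ) * ∫ t in (0:ℝ)..y, (y - t)^k * Real.exp (-t) := by
    rw [← intervalIntegral.integral_const_mul]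
    congr 1; funext t; ring
  rw [h2]
  simp only [sub_self, zero_pow (Nat.succ_ne_zero k), sub_zero, zero_mul, mul_neg, mul_one,
    neg_neg, Real.exp_zero, neg_zero]
  ring

lemma tail_eq (y : ℝ) (k : ℕ) :
    Real.exp (-y) - ∑ i ∈ Finset.range (k+1), (-y)^i / (i.factorial : ℝ)
      = (-1)^(k+1) / (k.factorial : ℝ) * ∫ t in (0:ℝ)..y, (y - t)^k * Real.exp (-t) := by
  induction k with
  | zero =>
    simp_rw [pow_zero, one_mul]
    rw [integral_exp_neg_interval]
    simp
  | succ k ih =>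
    rw [Finset.sum_range_succ, I_rec y k]
    have hk : ((k.factorial : ℝ)) ≠ 0 := by exact_mod_cast k.factorial_ne_zero
    have hk1 : (((k+1).factorial : ℝ)) ≠ 0 := by exact_mod_cast (k+1).factorial_ne_zero
    have hfac : (((k+1).factorial : ℝ)) = (k+1) * (k.factorial : ℝ) := by
      rw [Nat.factorial_succ]; push_cast; ring
    have hy : ((-y : ℝ))^(k+1) = (-1)^(k+1) * y^(k+1) := by
      rw [neg_pow]
    have : Real.exp (-y) - ∑ i ∈ Finset.range (k+1), (-y)^i / (i.factorial : ℝ)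
        = (-1)^(k+1) / (k.factorial : ℝ) * ∫ t in (0:ℝ)..y, (y - t)^k * Real.exp (-t) := ih
    set I : ℝ := ∫ t in (0:ℝ)..y, (y - t)^k * Real.exp (-t)
    have hexp : Real.exp (-y) = ∑ i ∈ Finset.range (k+1), (-y)^i / (i.factorial : ℝ)
        + (-1)^(k+1) / (k.factorial : ℝ) * I := by linarith
    rw [hexp, hfac, hy]
    field_simp
    ring

lemma poissonPMF_apply (r : ℝ≥0) (n : ℕ) :
    poissonPMF r n = ENNReal.ofReal (poissonPMFReal r n) := rfl

lemma poisson_tail (r : ℝ≥0) (i : ℕ) :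
    (poissonMeasure r {k | i ≤ k}).toReal
      = 1 - ∑ k ∈ Finset.range i, poissonPMFReal r k := by
  have hset : {k : ℕ | i ≤ k} = (↑(Finset.range i) : Set ℕ)ᶜ := by
    ext k; simp [Nat.not_lt]
  have hfin : (poissonMeasure r) (↑(Finset.range i) : Set ℕ)
      = ∑ k ∈ Finset.range i, ENNReal.ofReal (poissonPMFReal r k) := by
    rw [← MeasureTheory.sum_measure_singleton (s := Finset.range i)]
    simp_rw [poissonMeasure_singleton]; rfl
  have hle : (poissonMeasure r) (↑(Finset.range i) : Set ℕ) ≤ 1 := by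
    rw [← (measure_univ (μ := poissonMeasure r))]
    exact measure_mono (Set.subset_univ _)
  rw [hset, measure_compl (Finset.measurableSet _) (measure_ne_top _ _), measure_univ, hfin,
    ENNReal.toReal_sub_of_le (hfin ▸ hle) ENNReal.one_ne_top]
  rw [ENNReal.toReal_one]
  congr 1
  rw [ENNReal.toReal_sum (fun k _ => ENNReal.ofReal_ne_top)]
  exact Finset.sum_congr rfl fun k _ => ENNReal.toReal_ofReal poissonPMFReal_nonneg

set_option maxHeartbeats 1000000 in
/-- **Smoothed alternating-series approximation to the exponential**: for every `y > 0`
and `r > 0`, if `L ~ Poisson(r)`, then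
`|−∑_{i=0}^∞ (P(L ≥ i)/i!)(−y)^i + e^{−y}| ≤ e^{−r}(1 − e^{−y})`. -/
theorem smoothed_alternating_series_bound (r : ℝ≥0) (hr : 0 < r) (y : ℝ) (hy : 0 < y) :
    |-∑' i : ℕ, (poissonMeasure r {k | i ≤ k}).toReal / (Nat.factorial i : ℝ) * (-y) ^ i
        + Real.exp (-y)|
      ≤ Real.exp (-(r : ℝ)) * (1 - Real.exp (-y)) := by
  classical
  set p : ℕ → ℝ := fun k => poissonPMFReal r k with hp
  have hp_def : ∀ k, p k = Real.exp (-(r:ℝ)) * (r:ℝ)^k / k.factorial := fun k => rfl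
  have hp_nonneg : ∀ k, 0 ≤ p k := fun k => poissonPMFReal_nonneg
  have hp_sum : HasSum p 1 := poissonPMFRealSum r
  set a : ℕ → ℝ := fun i => (-y)^i / i.factorial with ha
  have ha_sum : HasSum a (Real.exp (-y)) := hasSum_exp_real (-y)
  have ha_abs : ∀ i, |a i| = y^i / i.factorial := by
    intro i
    rw [ha, abs_div, abs_pow, abs_neg, abs_of_pos hy, Nat.abs_cast]
  have ha_summable_abs : Summable (fun i => y^i / (i.factorial : ℝ)) :=
    Real.summable_pow_div_factorial y
  set c : ℕ → ℝ := fun i => ∑ k ∈ Finset.range i, p k with hc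
  have hc_nonneg : ∀ i, 0 ≤ c i := fun i => Finset.sum_nonneg fun k _ => hp_nonneg k
  have hc_le_one : ∀ i, c i ≤ 1 := by
    intro i
    calc c i ≤ ∑' k, p k := Summable.sum_le_tsum _ (fun k _ => hp_nonneg k) hp_sum.summable
      _ = 1 := hp_sum.tsum_eq
  -- Step 1: rewrite -A + exp(-y) as ∑' c_i * a_i
  have htail : ∀ i : ℕ,
      (poissonMeasure r {k | i ≤ k}).toReal / (Nat.factorial i : ℝ) * (-y) ^ i
        = a i - c i * a i := by
    intro i
    rw [poisson_tail r i, ha]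
    simp only []
    rw [hc]
    field_simp
    ring
  have hsummable_ca : Summable (fun i => c i * a i) := by
    apply Summable.of_norm
    apply Summable.of_nonneg_of_le (fun i => norm_nonneg _) (fun i => ?_) ha_summable_abs
    rw [Real.norm_eq_abs, abs_mul, abs_of_nonneg (hc_nonneg i), ha_abs i]
    calc c i * (y^i / i.factorial) ≤ 1 * (y^i / i.factorial) := by
          apply mul_le_mul_of_nonneg_right (hc_le_one i) (by positivity)
      _ = y^i / i.factorial := one_mul _
  have hsummable_A : Summable (fun i => a i - c i * a i) :=
    ha_sum.summable.sub hsummable_ca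
  have hstep1 :
      -∑' i : ℕ, (poissonMeasure r {k | i ≤ k}).toReal / (Nat.factorial i : ℝ) * (-y) ^ i
        + Real.exp (-y) = ∑' i, c i * a i := by
    have h1 : ∑' i : ℕ, (poissonMeasure r {k | i ≤ k}).toReal / (Nat.factorial i : ℝ) * (-y) ^ i
        = ∑' i, (a i - c i * a i) := by
      exact tsum_congr htail
    rw [h1, Summable.tsum_sub ha_sum.summable hsummable_ca, ha_sum.tsum_eq]
    ring
  -- Step 2: Fubini
  set f : ℕ → ℕ → ℝ := fun k i => if k < i then p k * a i else 0 with hf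
  have hf_summable : Summable (Function.uncurry f) := by
    apply Summable.of_norm
    apply Summable.of_nonneg_of_le (fun _ => norm_nonneg _) (fun q => ?_)
      ((hp_sum.summable.mul_of_nonneg ha_summable_abs hp_nonneg
        (fun i => by positivity)) : Summable fun q : ℕ × ℕ => p q.1 * (y^q.2 / q.2.factorial))
    rcases q with ⟨k, i⟩
    simp only [Function.uncurry, hf]
    rcases lt_or_ge k i with h | h
    · rw [if_pos h, Real.norm_eq_abs, abs_mul, abs_of_nonneg (hp_nonneg k), ha_abs i]
    · rw [if_neg (by omega), norm_zero]
      exact mul_nonneg (hp_nonneg k) (by positivity)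
  set T : ℕ → ℝ := fun k => Real.exp (-y) - ∑ i ∈ Finset.range (k+1), a i with hT
  have hfub : ∑' i, c i * a i = ∑' k, p k * T k := by
    have hL : ∀ i, c i * a i = ∑' k, f k i := by
      intro i
      rw [tsum_eq_sum (s := Finset.range i) (fun k hk => by
        rw [hf]; simp only []; rw [if_neg (by simp at hk; omega)])]
      rw [hc, Finset.sum_mul]
      apply Finset.sum_congr rfl
      intro k hk
      rw [hf]
      simp only []
      rw [if_pos (Finset.mem_range.mp hk)]
    have hR : ∀ k, ∑' i, f k i = p k * T k := by
      intro k
      have h1 : ∀ i, f k i = p k * (if k < i then a i else 0) := by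
        intro i; rw [hf]; simp only [mul_ite, mul_zero]
      simp_rw [h1]
      rw [tsum_mul_left]
      congr 1
      have h2 : ∀ i, (if k < i then a i else 0) = a i - (if i ≤ k then a i else 0) := by
        intro i
        by_cases h : k < i
        · rw [if_pos h, if_neg (by omega), sub_zero]
        · rw [if_neg h, if_pos (by omega)]; ring
      simp_rw [h2]
      have h3 : Summable (fun i => if i ≤ k then a i else 0) :=
        summable_of_ne_finset_zero (s := Finset.range (k+1))
          (fun i hi => by rw [if_neg (by simp at hi; omega)])
      rw [Summable.tsum_sub ha_sum.summable h3, ha_sum.tsum_eq, hT]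
      congr 1
      rw [tsum_eq_sum (s := Finset.range (k+1)) (fun i hi => by
        rw [if_neg (by simp at hi; omega)])]
      apply Finset.sum_congr rfl
      intro i hi
      rw [if_pos (by simp at hi; omega)]
    calc ∑' i, c i * a i = ∑' i, ∑' k, f k i := tsum_congr hL
      _ = ∑' k, ∑' i, f k i := Summable.tsum_comm hf_summable
      _ = ∑' k, p k * T k := tsum_congr hR
  -- Step 3/4: integral representation
  set G : ℕ → ℝ → ℝ := fun k t =>
    p k * ((-1)^(k+1) / (k.factorial : ℝ)) * ((y - t)^k * Real.exp (-t)) with hG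
  have hG_cont : ∀ k, Continuous (G k) := by intro k; rw [hG]; fun_prop
  have hG_int : ∀ k, Integrable (G k) (volume.restrict (Set.Ioc 0 y)) :=
    fun k => (hG_cont k).integrableOn_Ioc
  have hG_val : ∀ k, ∫ t in Set.Ioc 0 y, G k t = p k * T k := by
    intro k
    rw [hG]
    simp only []
    rw [MeasureTheory.integral_const_mul, ← intervalIntegral.integral_of_le hy.le, hT]
    simp only []
    rw [tail_eq y k]
    ring
  have hfac_one : ∀ k : ℕ, (1:ℝ) ≤ (k.factorial : ℝ) := by
    intro k; exact_mod_cast k.factorial_pos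
  have hG_norm : ∀ k, ∫ t in Set.Ioc 0 y, ‖G k t‖ ≤ (p k * (y^k / k.factorial)) * y := by
    intro k
    have hb : ∀ t ∈ Set.Ioc (0:ℝ) y, ‖G k t‖ ≤ p k * (y^k / k.factorial) := by
      intro t ht
      rw [hG]
      simp only []
      rw [Real.norm_eq_abs, abs_mul, abs_mul, abs_of_nonneg (hp_nonneg k), abs_div, abs_pow,
        abs_neg, abs_one, one_pow, Nat.abs_cast, abs_mul, abs_pow,
        abs_of_nonneg (by linarith [ht.2] : (0:ℝ) ≤ y - t), abs_of_pos (Real.exp_pos (-t))]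
      have h1 : (y - t)^k ≤ y^k := by
        apply pow_le_pow_left₀ (by linarith [ht.2]) (by linarith [ht.1.le])
      have h2 : Real.exp (-t) ≤ 1 := by
        rw [Real.exp_le_one_iff]; linarith [ht.1]
      calc p k * (1 / (k.factorial:ℝ)) * ((y - t)^k * Real.exp (-t))
          ≤ p k * (1 / (k.factorial:ℝ)) * (y^k * 1) := by
            apply mul_le_mul_of_nonneg_left _ (mul_nonneg (hp_nonneg k) (by positivity))
            apply mul_le_mul h1 h2 (Real.exp_pos _).le (by positivity)
        _ = p k * (y^k / k.factorial) := by ring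
    calc ∫ t in Set.Ioc 0 y, ‖G k t‖
        ≤ ∫ _t in Set.Ioc 0 y, (p k * (y^k / k.factorial)) := by
          apply integral_mono_of_nonneg (Filter.Eventually.of_forall fun t => norm_nonneg _)
            (integrable_const _)
          filter_upwards [MeasureTheory.ae_restrict_mem measurableSet_Ioc] with t ht
          exact hb t ht
      _ = (p k * (y^k / k.factorial)) * y := by
          rw [setIntegral_const]
          simp [Real.volume_Ioc, ENNReal.toReal_ofReal hy.le, max_eq_left hy.le]
          ring
  have hG_sum : Summable (fun k => ∫ t in Set.Ioc 0 y, ‖G k t‖) := by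
    apply Summable.of_nonneg_of_le (fun k => integral_nonneg fun t => norm_nonneg _)
      (fun k => (hG_norm k).trans ?_)
      (((Real.summable_pow_div_factorial ((r:ℝ)*y)).mul_left (Real.exp (-(r:ℝ)))).mul_right y)
    rw [hp_def]
    have h1 : Real.exp (-(r:ℝ)) * (r:ℝ)^k / k.factorial * (y^k / k.factorial) * y
        = (Real.exp (-(r:ℝ)) * (((r:ℝ)*y)^k / k.factorial) * y) * (1 / k.factorial) := by
      rw [mul_pow]; ring
    rw [h1]
    have h2 : (1:ℝ) / k.factorial ≤ 1 := by
      rw [div_le_one (by positivity : (0:ℝ) < (k.factorial:ℝ))]; exact hfac_one k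
    have h3 : 0 ≤ Real.exp (-(r:ℝ)) * (((r:ℝ)*y)^k / k.factorial) * y := by positivity
    nlinarith
  have hSwap := MeasureTheory.hasSum_integral_of_summable_integral_norm hG_int hG_sum
  simp_rw [hG_val] at hSwap
  have hD : ∑' k, p k * T k = ∫ t in Set.Ioc 0 y, (∑' k, G k t) := hSwap.tsum_eq
  -- pointwise identity
  have hGt : ∀ t : ℝ, (∑' k, G k t)
      = (-(Real.exp (-(r:ℝ)) * Real.exp (-t)))
          * ∑' k : ℕ, (-((r:ℝ)*(y - t)))^k / ((k.factorial : ℝ))^2 := by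
    intro t
    rw [← tsum_mul_left]
    apply tsum_congr
    intro k
    rw [hG]
    simp only []
    rw [hp_def]
    have h1 : (-((r:ℝ)*(y-t)))^k = (-1)^k * ((r:ℝ)^k * (y-t)^k) := by
      rw [neg_pow, mul_pow]
    rw [h1, pow_succ]
    have h2 : ((k.factorial:ℝ)) ≠ 0 := by positivity
    field_simp
  -- final bound
  rw [hstep1, hfub, hD]
  calc |∫ t in Set.Ioc 0 y, (∑' k, G k t)|
      ≤ ∫ t in Set.Ioc 0 y, ‖∑' k, G k t‖ := by
        rw [← Real.norm_eq_abs]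
        exact MeasureTheory.norm_integral_le_integral_norm _
    _ ≤ ∫ t in Set.Ioc 0 y, Real.exp (-(r:ℝ)) * Real.exp (-t) := by
        apply integral_mono_of_nonneg (Filter.Eventually.of_forall fun t => norm_nonneg _)
        · apply Continuous.integrableOn_Ioc; fun_prop
        filter_upwards [MeasureTheory.ae_restrict_mem measurableSet_Ioc] with t ht
        rw [hGt t, Real.norm_eq_abs, abs_mul, abs_neg, abs_mul,
          abs_of_pos (Real.exp_pos _), abs_of_pos (Real.exp_pos _)]
        have hx0 : (0:ℝ) ≤ (r:ℝ)*(y - t) := by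
          have : (0:ℝ) ≤ (r:ℝ) := r.coe_nonneg
          nlinarith [ht.2]
        have := abs_g_le_one hx0
        nlinarith [mul_pos (Real.exp_pos (-(r:ℝ))) (Real.exp_pos (-t)),
          abs_nonneg (∑' k : ℕ, (-((r:ℝ)*(y - t)))^k / ((k.factorial : ℝ))^2)]
    _ = Real.exp (-(r:ℝ)) * (1 - Real.exp (-y)) := by
        rw [MeasureTheory.integral_const_mul, ← intervalIntegral.integral_of_le hy.le,
          integral_exp_neg_interval y]
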